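/- arXiv:1708.02677 — 3 statements merged into one kernel-verified Lean document; each statement's English description precedes it below -/
import Mathlib

section
/- Let G = (V, E) be a finite graph with |V| = n and maximum degree Δ, and let k ≥ Δ + 2. Then |C_sf(G,k)| ≤ k·n·|C_p(G,k)|, where C_p(G,k) is the set of proper k-colorings and C_sf(G,k) is the set of singly-flawed k-colorings of G. -/
/-- A `k`-coloring `σ` of `G` is proper if no edge is monochromatic. -/
def IsProper {V : Type*} {k : ℕ} (G : SimpleGraph V) (σ : V → Fin k) : Prop :=
  ∀ u v : V, G.Adj u v → σ u ≠ σ v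

/-- A `k`-coloring `σ` is singly-flawed if it has a monochromatic edge and
some vertex is incident to every monochromatic edge. -/
def IsSinglyFlawed {V : Type*} {k : ℕ} (G : SimpleGraph V) (σ : V → Fin k) : Prop :=
  (∃ u v : V, G.Adj u v ∧ σ u = σ v) ∧
  ∃ x : V, ∀ u v : V, G.Adj u v → σ u = σ v → x = u ∨ x = v

theorem stmt_1 {V : Type*} [Fintype V] (G : SimpleGraph V) [DecidableRel G.Adj]
    (k : ℕ) (hk : G.maxDegree + 2 ≤ k) :
    Nat.card {σ : V → Fin k // IsSinglyFlawed G σ} ≤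
      k * Fintype.card V * Nat.card {σ : V → Fin k // IsProper G σ} := by
  classical
  have key : ∀ σ : {σ : V → Fin k // IsSinglyFlawed G σ},
      ∃ x : V, ∃ c : Fin k, IsProper G (Function.update σ.1 x c) := by
    rintro ⟨σ, ⟨⟨u0, v0, hadj, heq⟩, x, hx⟩⟩
    refine ⟨x, ?_⟩
    have hcard : ((G.neighborFinset x).image σ).card < k := by
      calc ((G.neighborFinset x).image σ).card ≤ (G.neighborFinset x).card :=
            Finset.card_image_le
        _ = G.degree x := G.card_neighborFinset_eq_degree x
        _ ≤ G.maxDegree := G.degree_le_maxDegree x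
        _ < k := by omega
    obtain ⟨c, hc⟩ : ∃ c : Fin k, c ∉ (G.neighborFinset x).image σ := by
      by_contra h
      push_neg at h
      have : (Finset.univ : Finset (Fin k)).card ≤ ((G.neighborFinset x).image σ).card :=
        Finset.card_le_card (fun c _ => h c)
      simp at this
      omega
    refine ⟨c, fun u v huv => ?_⟩
    rcases eq_or_ne u x with hu | hu
    · subst hu
      have hvx : v ≠ u := (G.ne_of_adj huv).symm
      rw [Function.update_self, Function.update_of_ne hvx]
      intro h
      exact hc (by rw [h]; exact Finset.mem_image_of_mem σ (by simpa using huv))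
    · rcases eq_or_ne v x with hv | hv
      · subst hv
        rw [Function.update_self, Function.update_of_ne hu]
        intro h
        exact hc (by rw [← h]; exact Finset.mem_image_of_mem σ (by simpa using huv.symm))
      · rw [Function.update_of_ne hu, Function.update_of_ne hv]
        intro h
        rcases hx u v huv h with rfl | rfl
        · exact hu rfl
        · exact hv rfl
  choose x c hc using key
  let f : {σ : V → Fin k // IsSinglyFlawed G σ} → Fin k × V × {σ : V → Fin k // IsProper G σ} :=
    fun σ => (σ.1 (x σ), x σ, ⟨Function.update σ.1 (x σ) (c σ), hc σ⟩)
  have hinj : Function.Injective f := by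
    intro σ₁ σ₂ h
    simp only [f, Prod.mk.injEq, Subtype.mk.injEq] at h
    obtain ⟨h1, h2, h3⟩ := h
    apply Subtype.ext
    funext v
    rcases eq_or_ne v (x σ₁) with rfl | hv
    · rw [h1]; rw [h2]
    · have := congrFun h3 v
      rwa [Function.update_of_ne hv, Function.update_of_ne (h2 ▸ hv)] at this
  calc Nat.card {σ : V → Fin k // IsSinglyFlawed G σ}
      ≤ Nat.card (Fin k × V × {σ : V → Fin k // IsProper G σ}) :=
        Nat.card_le_card_of_injective f hinj
    _ = k * Fintype.card V * Nat.card {σ : V → Fin k // IsProper G σ} := by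
        simp [Nat.card_prod, Nat.card_eq_fintype_card, mul_assoc]
end

section
/- Let G = (V, E) be a finite graph with |V| = n and maximum degree Δ, and let k ≥ Δ + 2. Then there exists a function g' : C_sf(G,k) → C_p(G,k) such that every proper coloring in C_p(G,k) has at most k·n preimages under g'. -/
theorem stmt_2 {V : Type*} [Fintype V] (G : SimpleGraph V) [DecidableRel G.Adj]
    (k : ℕ) (hk : G.maxDegree + 2 ≤ k) :
    ∃ g' : {σ : V → Fin k // IsSinglyFlawed G σ} → {σ : V → Fin k // IsProper G σ},
      ∀ τ : {σ : V → Fin k // IsProper G σ},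
        Nat.card {σ : {σ : V → Fin k // IsSinglyFlawed G σ} // g' σ = τ} ≤
          k * Fintype.card V := by
  classical
  have hcol : ∀ (σ : V → Fin k) (x : V), ∃ c : Fin k, ∀ v, G.Adj x v → σ v ≠ c := by
    intro σ x
    by_contra h
    push_neg at h
    have hsub : (Finset.univ : Finset (Fin k)) ⊆ (G.neighborFinset x).image σ := by
      intro c _
      obtain ⟨v, hv, hc⟩ := h c
      exact Finset.mem_image.2 ⟨v, by simpa using hv, hc⟩
    have h1 : k ≤ ((G.neighborFinset x).image σ).card := by
      simpa using Finset.card_le_card hsub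
    have h2 : ((G.neighborFinset x).image σ).card ≤ G.degree x :=
      (Finset.card_image_le).trans_eq (G.card_neighborFinset_eq_degree x)
    have h3 := G.degree_le_maxDegree x
    omega
  set X : {σ : V → Fin k // IsSinglyFlawed G σ} → V := fun s => Classical.choose s.2.2 with hX
  set C : {σ : V → Fin k // IsSinglyFlawed G σ} → Fin k :=
    fun s => Classical.choose (hcol s.1 (X s)) with hC
  have hXspec : ∀ s : {σ : V → Fin k // IsSinglyFlawed G σ}, ∀ u v, G.Adj u v →
      s.1 u = s.1 v → X s = u ∨ X s = v := fun s => Classical.choose_spec s.2.2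
  have hCspec : ∀ s : {σ : V → Fin k // IsSinglyFlawed G σ}, ∀ v, G.Adj (X s) v →
      s.1 v ≠ C s := fun s => Classical.choose_spec (hcol s.1 (X s))
  have hproper : ∀ s, IsProper G (Function.update s.1 (X s) (C s)) := by
    intro s u v huv
    rcases eq_or_ne u (X s) with rfl | hu
    · have hv : v ≠ X s := (G.ne_of_adj huv).symm
      rw [Function.update_self, Function.update_of_ne hv]
      exact fun h => hCspec s v huv h.symm
    · rw [Function.update_of_ne hu]
      rcases eq_or_ne v (X s) with rfl | hv
      · rw [Function.update_self]
        exact hCspec s u huv.symm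
      · rw [Function.update_of_ne hv]
        intro h
        rcases hXspec s u v huv h with h1 | h1
        · exact hu h1.symm
        · exact hv h1.symm
  refine ⟨fun s => ⟨Function.update s.1 (X s) (C s), hproper s⟩, ?_⟩
  intro τ
  have key : Nat.card {σ : {σ : V → Fin k // IsSinglyFlawed G σ} //
      (⟨Function.update σ.1 (X σ) (C σ), hproper σ⟩ : {σ : V → Fin k // IsProper G σ}) = τ}
      ≤ Nat.card (V × Fin k) := by
    apply Nat.card_le_card_of_injective (fun p => (X p.1, p.1.1 (X p.1)))
    intro a b hab
    have hx : X a.1 = X b.1 := congrArg Prod.fst hab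
    have hc : a.1.1 (X a.1) = b.1.1 (X b.1) := congrArg Prod.snd hab
    have ha := congrArg Subtype.val a.2
    have hb := congrArg Subtype.val b.2
    apply Subtype.ext; apply Subtype.ext
    funext v
    rcases eq_or_ne v (X a.1) with rfl | hv
    · rw [hc, hx]
    · have h1 : a.1.1 v = τ.1 v := by
        rw [← ha]; simp [Function.update_of_ne hv]
      have h2 : b.1.1 v = τ.1 v := by
        rw [← hb]; simp [Function.update_of_ne (hx ▸ hv)]
      rw [h1, h2]
  calc Nat.card {σ : {σ : V → Fin k // IsSinglyFlawed G σ} //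
      (⟨Function.update σ.1 (X σ) (C σ), hproper σ⟩ : {σ : V → Fin k // IsProper G σ}) = τ}
      ≤ Nat.card (V × Fin k) := key
    _ = k * Fintype.card V := by
        simp [Nat.card_eq_fintype_card, Fintype.card_prod, mul_comm]
end

section
/- Let G = (V,E) be a finite graph with maximum degree Δ and k ≥ Δ + 2, and let Ω = C_p(G,k) ∪ C_sf(G,k). If π is the uniform distribution on Ω, then π(C_p(G,k)) ≥ 1/(k·|V| + 1). -/
section Aux

variable {V : Type*} [Fintype V] (G : SimpleGraph V) [DecidableRel G.Adj] {k : ℕ}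

/-- There is a color avoiding all neighbors of `x`. -/
lemma exists_good_color (hk : G.maxDegree + 1 ≤ k) (σ : V → Fin k) (x : V) :
    ∃ c : Fin k, ∀ v, G.Adj x v → c ≠ σ v := by
  classical
  set T : Finset (Fin k) := (G.neighborFinset x).image σ with hT
  have hcard : T.card < k := by
    calc T.card ≤ (G.neighborFinset x).card := Finset.card_image_le
    _ = G.degree x := G.card_neighborFinset_eq_degree x
    _ ≤ G.maxDegree := G.degree_le_maxDegree x
    _ < k := by omega
  have : Tᶜ.Nonempty := by
    rw [← Finset.card_pos, Finset.card_compl, Fintype.card_fin]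
    omega
  obtain ⟨c, hc⟩ := this
  rw [Finset.mem_compl] at hc
  refine ⟨c, fun v hv hcv => hc ?_⟩
  exact Finset.mem_image.2 ⟨v, (G.mem_neighborFinset x v).2 hv, hcv.symm⟩

/-- A proper coloring exists. -/
lemma exists_proper (hk : G.maxDegree + 1 ≤ k) : ∃ σ : V → Fin k, IsProper G σ := by
  classical
  have key : ∀ s : Finset V, ∃ σ : V → Fin k,
      ∀ u ∈ s, ∀ v ∈ s, G.Adj u v → σ u ≠ σ v := by
    intro s
    induction s using Finset.cons_induction with
    | empty =>
      have : 0 < k := by omega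
      exact ⟨fun _ => ⟨0, this⟩, by simp⟩
    | cons x s hxs ih =>
      obtain ⟨σ, hσ⟩ := ih
      obtain ⟨c, hc⟩ := exists_good_color G hk σ x
      refine ⟨Function.update σ x c, ?_⟩
      intro u hu v hv huv
      simp only [Finset.mem_cons] at hu hv
      rcases hu with rfl | hu <;> rcases hv with rfl | hv
      · exact absurd huv (G.irrefl)
      · rw [Function.update_self, Function.update_of_ne (by rintro rfl; exact hxs hv)]
        exact hc v huv
      · rw [Function.update_self, Function.update_of_ne (by rintro rfl; exact hxs hu)]
        exact fun h => hc u (G.adj_symm huv) h.symm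
      · rw [Function.update_of_ne (by rintro rfl; exact hxs hu),
          Function.update_of_ne (by rintro rfl; exact hxs hv)]
        exact hσ u hu v hv huv
  obtain ⟨σ, hσ⟩ := key Finset.univ
  exact ⟨σ, fun u v h => hσ u (Finset.mem_univ u) v (Finset.mem_univ v) h⟩

/-- Recoloring the flaw vertex of a singly-flawed coloring gives a proper coloring. -/
lemma sf_card_le (hk : G.maxDegree + 1 ≤ k) :
    Nat.card {σ : V → Fin k | IsSinglyFlawed G σ} ≤
      Fintype.card V * (k * Nat.card {σ : V → Fin k | IsProper G σ}) := by
  classical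
  have hinj : ∃ f : {σ : V → Fin k // IsSinglyFlawed G σ} →
      V × Fin k × {σ : V → Fin k // IsProper G σ}, Function.Injective f := by
    refine ⟨fun ⟨σ, hσ⟩ => ?_, ?_⟩
    · have hx := hσ.2
      let x := Classical.choose hx
      have hxspec := Classical.choose_spec hx
      let c := Classical.choose (exists_good_color G hk σ x)
      have hcspec := Classical.choose_spec (exists_good_color G hk σ x)
      refine ⟨x, σ x, Function.update σ x c, ?_⟩
      intro u v huv
      by_cases hu : u = x
      · subst hu
        rw [Function.update_self, Function.update_of_ne (G.ne_of_adj huv).symm]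
        exact hcspec v huv
      · by_cases hv : v = x
        · subst hv
          rw [Function.update_self, Function.update_of_ne hu]
          exact fun h => hcspec u (G.adj_symm huv) h.symm
        · rw [Function.update_of_ne hu, Function.update_of_ne hv]
          intro h
          rcases hxspec u v huv h with rfl | rfl
          · exact hu rfl
          · exact hv rfl
    · rintro ⟨σ₁, h₁⟩ ⟨σ₂, h₂⟩ h
      simp only [Prod.mk.injEq, Subtype.mk.injEq] at h
      obtain ⟨hx, hc, hσ⟩ := h
      have e1 : Function.update (Function.update σ₁
          (Classical.choose h₁.2) (Classical.choose (exists_good_color G hk σ₁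
          (Classical.choose h₁.2)))) (Classical.choose h₁.2)
          (σ₁ (Classical.choose h₁.2)) = σ₁ := by
        rw [Function.update_idem, Function.update_eq_self]
      have e2 : Function.update (Function.update σ₂
          (Classical.choose h₂.2) (Classical.choose (exists_good_color G hk σ₂
          (Classical.choose h₂.2)))) (Classical.choose h₂.2)
          (σ₂ (Classical.choose h₂.2)) = σ₂ := by
        rw [Function.update_idem, Function.update_eq_self]
      ext1
      show σ₁ = σ₂
      rw [← e1, ← e2, Subtype.mk.inj hσ, hc, hx]
  obtain ⟨f, hf⟩ := hinj
  calc Nat.card {σ : V → Fin k | IsSinglyFlawed G σ}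
      ≤ Nat.card (V × Fin k × {σ : V → Fin k // IsProper G σ}) :=
        Nat.card_le_card_of_injective f hf
    _ = Fintype.card V * (k * Nat.card {σ : V → Fin k | IsProper G σ}) := by
        rw [Nat.card_prod, Nat.card_prod, Nat.card_eq_fintype_card (α := V),
          Nat.card_eq_fintype_card (α := Fin k), Fintype.card_fin]; rfl

end Aux

theorem stmt_16 {V : Type*} [Fintype V] (G : SimpleGraph V) [DecidableRel G.Adj]
    (k : ℕ) (hk : G.maxDegree + 2 ≤ k) :
    ((k * Fintype.card V + 1 : ℕ) : ℝ)⁻¹ ≤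
      (Nat.card {σ : V → Fin k | IsProper G σ} : ℝ) /
        (Nat.card {σ : V → Fin k | IsProper G σ ∨ IsSinglyFlawed G σ} : ℝ) := by
  classical
  have hk1 : G.maxDegree + 1 ≤ k := by omega
  set P := Nat.card {σ : V → Fin k | IsProper G σ} with hP
  set S := Nat.card {σ : V → Fin k | IsProper G σ ∨ IsSinglyFlawed G σ} with hS
  have hPpos : 0 < P := by
    obtain ⟨σ, hσ⟩ := exists_proper G hk1
    rw [hP, Nat.card_pos_iff]
    exact ⟨⟨⟨σ, hσ⟩⟩, Set.Finite.to_subtype (Set.toFinite _)⟩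
  have hunion : {σ : V → Fin k | IsProper G σ ∨ IsSinglyFlawed G σ} =
      {σ : V → Fin k | IsProper G σ} ∪ {σ : V → Fin k | IsSinglyFlawed G σ} := rfl
  have hSle : S ≤ (k * Fintype.card V + 1) * P := by
    have h1 : S ≤ P + Nat.card {σ : V → Fin k | IsSinglyFlawed G σ} := by
      rw [hS, hP, hunion, Nat.card_coe_set_eq, Nat.card_coe_set_eq,
        Nat.card_coe_set_eq]
      exact Set.ncard_union_le _ _
    have h2 := sf_card_le G hk1
    rw [← hP] at h2
    calc S ≤ P + Nat.card {σ : V → Fin k | IsSinglyFlawed G σ} := h1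
      _ ≤ P + Fintype.card V * (k * P) := by omega
      _ = (k * Fintype.card V + 1) * P := by ring
  have hPS : P ≤ S := by
    rw [hP, hS, Nat.card_coe_set_eq, Nat.card_coe_set_eq]
    exact Set.ncard_le_ncard (fun σ hσ => Or.inl hσ) (Set.toFinite _)
  have hSpos : 0 < S := lt_of_lt_of_le hPpos hPS
  rw [inv_eq_one_div, div_le_div_iff₀ (by positivity) (by exact_mod_cast hSpos)]
  calc (1 : ℝ) * S = S := one_mul _
    _ ≤ ((k * Fintype.card V + 1) * P : ℕ) := by exact_mod_cast hSle
    _ = (P : ℝ) * ((k * Fintype.card V + 1 : ℕ) : ℝ) := by push_cast; ring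
end
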